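/- Let m ≥ 1, let H be a spanning subgraph of K_{m,m} with parts A and B of size m, and let q be the number of vertices of A that are not isolated in H. If q < m, then the number of perfect matchings of K_{m,m} ∖ H is at least m! · (1 − |E(H)|/(m − q)). -/
import Mathlib

open Finset

lemma fiber_card_aux (m : ℕ) (hm : 1 ≤ m) (a b : Fin m) :
    (Finset.univ.filter fun σ : Equiv.Perm (Fin m) => σ a = b).card * m
      = m.factorial := by
  have key : ∀ b' : Fin m,
      (Finset.univ.filter fun σ : Equiv.Perm (Fin m) => σ a = b').card
        = (Finset.univ.filter fun σ : Equiv.Perm (Fin m) => σ a = b).card := by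
    intro b'
    apply Finset.card_bij' (fun σ _ => Equiv.swap b' b * σ) (fun σ _ => Equiv.swap b b' * σ)
    · intro σ hσ
      simp only [Finset.mem_filter, Finset.mem_univ, true_and] at hσ ⊢
      simp [Equiv.Perm.mul_apply, hσ]
    · intro σ hσ
      simp only [Finset.mem_filter, Finset.mem_univ, true_and] at hσ ⊢
      simp [Equiv.Perm.mul_apply, hσ]
    · intro σ hσ
      rw [← mul_assoc, Equiv.swap_comm b b', Equiv.swap_mul_self, one_mul]
    · intro σ hσ
      rw [← mul_assoc, Equiv.swap_comm b' b, Equiv.swap_mul_self, one_mul]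
  have hsum : (Finset.univ : Finset (Equiv.Perm (Fin m))).card
      = ∑ b' : Fin m, (Finset.univ.filter fun σ : Equiv.Perm (Fin m) => σ a = b').card :=
    Finset.card_eq_sum_card_fiberwise (fun σ _ => Finset.mem_univ (σ a))
  have hcard : (Finset.univ : Finset (Equiv.Perm (Fin m))).card = m.factorial := by
    simp [Fintype.card_perm]
  rw [hcard] at hsum
  rw [hsum]
  simp only [key]
  rw [Finset.sum_const, Finset.card_univ, Fintype.card_fin, smul_eq_mul, mul_comm]

lemma fiber_card (m : ℕ) (hm : 1 ≤ m) (a b : Fin m) :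
    (Finset.univ.filter fun σ : Equiv.Perm (Fin m) => σ a = b).card = (m - 1).factorial := by
  have h := fiber_card_aux m hm a b
  obtain ⟨k, rfl⟩ : ∃ k, m = k + 1 := ⟨m - 1, by omega⟩
  rw [Nat.factorial_succ] at h
  simp only [Nat.add_sub_cancel]
  exact Nat.eq_of_mul_eq_mul_right (Nat.succ_pos k) (h.trans (Nat.mul_comm (k+1) k.factorial))

/-- Let `H` be a spanning subgraph of `K_{m,m}` (encoded as its set of edges, i.e. a set of
pairs `(a, b)` with `a` in the part `A` and `b` in the part `B`), and let `q` be the number of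
vertices of `A` that are not isolated in `H`. If `q < m`, then the number of perfect matchings
of `K_{m,m} ∖ H` (encoded as bijections `σ` from `A` to `B` avoiding the edges of `H`) is at
least `m! · (1 − |E(H)|/(m − q))`. -/
theorem matchings_lower_bound_via_nonisolated (m : ℕ) (hm : 1 ≤ m)
    (H : Finset (Fin m × Fin m)) (q : ℕ)
    (hq : q = (Finset.univ.filter fun a : Fin m => ∃ b, (a, b) ∈ H).card)
    (hqm : q < m) :
    (m.factorial : ℝ) * (1 - (H.card : ℝ) / ((m : ℝ) - (q : ℝ))) ≤
      (Set.ncard {σ : Equiv.Perm (Fin m) | ∀ a, (a, σ a) ∉ H} : ℝ) := by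
  classical
  set good : Finset (Equiv.Perm (Fin m)) :=
    Finset.univ.filter fun σ => ∀ a, (a, σ a) ∉ H with hgood
  have hset : {σ : Equiv.Perm (Fin m) | ∀ a, (a, σ a) ∉ H} = ↑good := by
    ext σ; simp [hgood]
  rw [hset, Set.ncard_coe_finset]
  set bad : Finset (Equiv.Perm (Fin m)) :=
    Finset.univ.filter fun σ => ¬ ∀ a, (a, σ a) ∉ H with hbad
  have hsplit : good.card + bad.card = m.factorial := by
    rw [hgood, hbad, Finset.card_filter_add_card_filter_not]
    simp [Fintype.card_perm]
  have hbadsub : bad ⊆ H.biUnion fun p =>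
      Finset.univ.filter fun σ : Equiv.Perm (Fin m) => σ p.1 = p.2 := by
    intro σ hσ
    simp only [hbad, Finset.mem_filter, Finset.mem_univ, true_and, not_forall,
      not_not] at hσ
    obtain ⟨a, ha⟩ := hσ
    refine Finset.mem_biUnion.2 ⟨(a, σ a), ha, ?_⟩
    simp
  have hbadcard : bad.card ≤ H.card * (m - 1).factorial := by
    calc bad.card ≤ (H.biUnion fun p =>
        Finset.univ.filter fun σ : Equiv.Perm (Fin m) => σ p.1 = p.2).card :=
        Finset.card_le_card hbadsub
      _ ≤ ∑ p ∈ H, (Finset.univ.filter fun σ : Equiv.Perm (Fin m) => σ p.1 = p.2).card :=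
        Finset.card_biUnion_le
      _ = ∑ p ∈ H, (m - 1).factorial := by
        apply Finset.sum_congr rfl
        intro p _
        exact fiber_card m hm p.1 p.2
      _ = H.card * (m - 1).factorial := by rw [Finset.sum_const, smul_eq_mul]
  -- good ≥ m! - |H| (m-1)!
  have hgoodge : (m.factorial : ℝ) - (H.card : ℝ) * ((m - 1).factorial : ℝ)
      ≤ (good.card : ℝ) := by
    have h1 : (good.card : ℝ) + (bad.card : ℝ) = (m.factorial : ℝ) := by
      exact_mod_cast congrArg (Nat.cast (R := ℝ)) hsplit
    have h2 : (bad.card : ℝ) ≤ (H.card : ℝ) * ((m - 1).factorial : ℝ) := by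
      exact_mod_cast hbadcard
    linarith
  refine le_trans ?_ hgoodge
  -- m!(1 - |H|/(m-q)) ≤ m! - |H|(m-1)!
  have hmq : (0 : ℝ) < (m : ℝ) - (q : ℝ) := by
    have : (q : ℝ) < (m : ℝ) := by exact_mod_cast hqm
    linarith
  have hfact : (m.factorial : ℝ) = (m : ℝ) * ((m - 1).factorial : ℝ) := by
    obtain ⟨k, rfl⟩ : ∃ k, m = k + 1 := ⟨m - 1, by omega⟩
    simp [Nat.factorial_succ]
  rw [mul_sub, mul_one]
  have hkey : (H.card : ℝ) * ((m - 1).factorial : ℝ)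
      ≤ (m.factorial : ℝ) * ((H.card : ℝ) / ((m : ℝ) - (q : ℝ))) := by
    rw [← mul_div_assoc, le_div_iff₀ hmq]
    have hHpos : (0 : ℝ) ≤ (H.card : ℝ) := by positivity
    have hfpos : (0 : ℝ) ≤ ((m - 1).factorial : ℝ) := by positivity
    have hqpos : (0 : ℝ) ≤ (q : ℝ) := by positivity
    nlinarith [mul_nonneg (mul_nonneg hHpos hfpos) hqpos]
  linarith
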